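/- For every ρ > 0 it holds that 2^{ρ·H_{1/(1+ρ)}(D)} / (1 + log₂ N)^ρ ≤ ∑_{i=1}^{N} i^ρ · p_i ≤ 2^{ρ·H_{1/(1+ρ)}(D)}. -/

import Mathlib

/-- **Arikan's Inequality.** Let `D` be a probability distribution on a finite nonempty
set `K` with pmf `P : K → (0,1]` summing to `1`, and let `e` enumerate the keys in
decreasing order of probability (so `p_i = P (e i)` are the sorted values). For every
`ρ > 0`:
`2^(ρ·H_{1/(1+ρ)}(D)) / (1 + log₂ |K|)^ρ ≤ ∑ i, i^ρ · p_i ≤ 2^(ρ·H_{1/(1+ρ)}(D))`,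
where `H_α(D) = (1/(1-α))·log₂(∑_x P(x)^α)`. -/
theorem arikan_inequality {K : Type*} [Fintype K] [Nonempty K]
    (P : K → ℝ) (hpos : ∀ x, 0 < P x) (hle : ∀ x, P x ≤ 1)
    (hsum : ∑ x, P x = 1)
    (e : Fin (Fintype.card K) ≃ K)
    (hsort : ∀ i j : Fin (Fintype.card K), i ≤ j → P (e j) ≤ P (e i))
    (ρ : ℝ) (hρ : 0 < ρ) :
    (2 : ℝ) ^ (ρ * ((1 / (1 - 1 / (1 + ρ))) * Real.logb 2 (∑ x, P x ^ (1 / (1 + ρ))))) /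
        (1 + Real.logb 2 (Fintype.card K)) ^ ρ ≤
      ∑ i : Fin (Fintype.card K), ((i : ℝ) + 1) ^ ρ * P (e i) ∧
    ∑ i : Fin (Fintype.card K), ((i : ℝ) + 1) ^ ρ * P (e i) ≤
      (2 : ℝ) ^ (ρ * ((1 / (1 - 1 / (1 + ρ))) * Real.logb 2 (∑ x, P x ^ (1 / (1 + ρ))))) := by
  have h1ρ : (0:ℝ) < 1 + ρ := by linarith
  have hn1 : 1 ≤ Fintype.card K := Fintype.card_pos
  set α : ℝ := 1 / (1 + ρ) with hα
  have hα0 : 0 < α := by positivity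
  have hα1 : α * (1 + ρ) = 1 := by rw [hα]; field_simp
  set q : Fin (Fintype.card K) → ℝ := fun i => P (e i) with hqdef
  have hq0 : ∀ i, 0 < q i := fun i => hpos _
  set S : ℝ := ∑ x, P x ^ α with hSdef
  have hS_eq : S = ∑ i, q i ^ α := (Equiv.sum_comp e (fun x => P x ^ α)).symm
  have hS0 : 0 < S := by
    rw [hSdef]
    exact Finset.sum_pos (fun x _ => Real.rpow_pos_of_pos (hpos x) _) Finset.univ_nonempty
  set T : ℝ := ∑ i : Fin (Fintype.card K), ((i : ℝ) + 1) ^ ρ * q i with hTdef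
  -- simplify the 2^(…) expression
  have hpow : (2:ℝ) ^ (ρ * ((1 / (1 - α)) * Real.logb 2 S)) = S ^ (1 + ρ) := by
    have h1 : (1:ℝ) - α = ρ / (1 + ρ) := by rw [hα]; field_simp; ring
    have h2 : ρ * ((1 / (1 - α)) * Real.logb 2 S) = Real.logb 2 S * (1 + ρ) := by
      rw [h1]; field_simp
    rw [h2, Real.rpow_mul (by norm_num : (0:ℝ) ≤ 2),
      Real.rpow_logb (by norm_num) (by norm_num) hS0]
  rw [hpow]
  have hqα : ∀ i, (0:ℝ) ≤ q i ^ α := fun i => (Real.rpow_pos_of_pos (hq0 i) _).le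
  have hi1 : ∀ i : Fin (Fintype.card K), (0:ℝ) < (i : ℝ) + 1 := fun i => by positivity
  -- key pointwise bound for the upper estimate
  have key : ∀ i : Fin (Fintype.card K), ((i : ℝ) + 1) * q i ^ α ≤ S := by
    intro i
    have h1 : ∀ j ∈ Finset.Iic i, q i ^ α ≤ q j ^ α := fun j hj =>
      Real.rpow_le_rpow (hq0 i).le (hsort j i (Finset.mem_Iic.mp hj)) hα0.le
    have h2 : (Finset.Iic i).card • (q i ^ α) ≤ ∑ j ∈ Finset.Iic i, q j ^ α :=
      Finset.card_nsmul_le_sum _ _ _ h1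
    have h3 : ∑ j ∈ Finset.Iic i, q j ^ α ≤ ∑ j, q j ^ α :=
      Finset.sum_le_sum_of_subset_of_nonneg (Finset.subset_univ _)
        (fun j _ _ => hqα j)
    have hcard : (Finset.Iic i).card = (i : ℕ) + 1 := Fin.card_Iic i
    calc ((i : ℝ) + 1) * q i ^ α = (Finset.Iic i).card • (q i ^ α) := by
          rw [hcard, nsmul_eq_mul]; push_cast; ring
      _ ≤ ∑ j ∈ Finset.Iic i, q j ^ α := h2
      _ ≤ ∑ j, q j ^ α := h3
      _ = S := hS_eq.symm
  -- upper bound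
  have upper : T ≤ S ^ (1 + ρ) := by
    have hterm : ∀ i : Fin (Fintype.card K),
        ((i : ℝ) + 1) ^ ρ * q i ≤ S ^ ρ * q i ^ α := by
      intro i
      have hbase : (0:ℝ) ≤ ((i : ℝ) + 1) * q i ^ α :=
        mul_nonneg (hi1 i).le (hqα i)
      have heq : ((i : ℝ) + 1) ^ ρ * q i = (((i : ℝ) + 1) * q i ^ α) ^ ρ * q i ^ α := by
        rw [Real.mul_rpow (hi1 i).le (hqα i), ← Real.rpow_mul (hq0 i).le,
          mul_assoc, ← Real.rpow_add (hq0 i),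
          show α * ρ + α = α * (1 + ρ) by ring, hα1, Real.rpow_one]
      rw [heq]
      exact mul_le_mul_of_nonneg_right
        (Real.rpow_le_rpow hbase (key i) hρ.le) (hqα i)
    calc T ≤ ∑ i : Fin (Fintype.card K), S ^ ρ * q i ^ α :=
          Finset.sum_le_sum (fun i _ => hterm i)
      _ = S ^ ρ * S := by rw [← Finset.mul_sum, hS_eq]
      _ = S ^ (1 + ρ) := by
          rw [Real.rpow_add hS0, Real.rpow_one]; ring
  -- lower bound via Hölder
  have hT0 : 0 < T := by
    refine Finset.sum_pos (fun i _ => mul_pos (Real.rpow_pos_of_pos (hi1 i) _) (hq0 i)) ?_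
    exact Finset.univ_nonempty
  set L : ℝ := 1 + Real.logb 2 (Fintype.card K) with hL
  have hlogn0 : 0 ≤ Real.logb 2 ((Fintype.card K : ℕ) : ℝ) := by
    apply Real.logb_nonneg (by norm_num)
    exact_mod_cast hn1
  have hL1 : (1:ℝ) ≤ L := by rw [hL]; linarith
  have hL0 : (0:ℝ) < L := by linarith
  have hconj : Real.HolderConjugate (1 + ρ) ((1 + ρ) / ρ) := by
    exact (Real.holderConjugate_iff_eq_conjExponent (by linarith)).mpr (by rw [add_sub_cancel_left])
  have holder : S ≤ T ^ α * (∑ i : Fin (Fintype.card K), ((i : ℝ) + 1)⁻¹) ^ (ρ * α) := by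
    have H := Real.inner_le_Lp_mul_Lq_of_nonneg (s := Finset.univ) hconj
      (f := fun i : Fin (Fintype.card K) => (((i : ℝ) + 1) ^ ρ * q i) ^ α)
      (g := fun i : Fin (Fintype.card K) => ((i : ℝ) + 1) ^ (-(ρ * α)))
      (fun i _ => Real.rpow_nonneg (mul_nonneg (Real.rpow_nonneg (hi1 i).le _) (hq0 i).le) _)
      (fun i _ => Real.rpow_nonneg (hi1 i).le _)
    have e1 : ∀ i : Fin (Fintype.card K),
        (((i : ℝ) + 1) ^ ρ * q i) ^ α * ((i : ℝ) + 1) ^ (-(ρ * α)) = q i ^ α := by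
      intro i
      rw [Real.mul_rpow (Real.rpow_nonneg (hi1 i).le _) (hq0 i).le,
        ← Real.rpow_mul (hi1 i).le,
        mul_comm (((i:ℝ)+1) ^ (ρ * α)) (q i ^ α), mul_assoc,
        ← Real.rpow_add (hi1 i), add_neg_cancel, Real.rpow_zero, mul_one]
    have e2 : ∀ i : Fin (Fintype.card K),
        ((((i : ℝ) + 1) ^ ρ * q i) ^ α) ^ (1 + ρ) = ((i : ℝ) + 1) ^ ρ * q i := by
      intro i
      rw [← Real.rpow_mul (mul_nonneg (Real.rpow_nonneg (hi1 i).le _) (hq0 i).le), hα1,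
        Real.rpow_one]
    have e3 : ∀ i : Fin (Fintype.card K),
        (((i : ℝ) + 1) ^ (-(ρ * α))) ^ ((1 + ρ) / ρ) = ((i : ℝ) + 1)⁻¹ := by
      intro i
      rw [← Real.rpow_mul (hi1 i).le,
        show -(ρ * α) * ((1 + ρ) / ρ) = -1 by rw [hα]; field_simp,
        Real.rpow_neg_one]
    have hexp2 : 1 / ((1 + ρ) / ρ) = ρ * α := by rw [hα]; field_simp
    calc S = ∑ i, q i ^ α := hS_eq
      _ = ∑ i : Fin (Fintype.card K),
            (((i : ℝ) + 1) ^ ρ * q i) ^ α * ((i : ℝ) + 1) ^ (-(ρ * α)) :=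
          (Finset.sum_congr rfl (fun i _ => (e1 i))).symm
      _ ≤ (∑ i : Fin (Fintype.card K), ((((i : ℝ) + 1) ^ ρ * q i) ^ α) ^ (1 + ρ)) ^ (1 / (1 + ρ)) *
            (∑ i : Fin (Fintype.card K),
              (((i : ℝ) + 1) ^ (-(ρ * α))) ^ ((1 + ρ) / ρ)) ^ (1 / ((1 + ρ) / ρ)) := H
      _ = T ^ α * (∑ i : Fin (Fintype.card K), ((i : ℝ) + 1)⁻¹) ^ (ρ * α) := by
          rw [hexp2]
          congr 1
          · rw [show (1 : ℝ) / (1 + ρ) = α from rfl]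
            congr 1
            exact Finset.sum_congr rfl (fun i _ => e2 i)
          · congr 1
            exact Finset.sum_congr rfl (fun i _ => e3 i)
  have hharm : ∑ i : Fin (Fintype.card K), ((i : ℝ) + 1)⁻¹ ≤ L := by
    have h1 : ∑ i : Fin (Fintype.card K), ((i : ℝ) + 1)⁻¹ = (harmonic (Fintype.card K) : ℝ) := by
      rw [harmonic]
      push_cast
      rw [Finset.sum_range fun i => (((i:ℝ) + 1)⁻¹)]
    have h2 : (harmonic (Fintype.card K) : ℝ) ≤ 1 + Real.log (Fintype.card K) :=
      harmonic_le_one_add_log _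
    have h3 : Real.log ((Fintype.card K : ℕ) : ℝ) ≤ Real.logb 2 ((Fintype.card K : ℕ) : ℝ) := by
      rw [Real.logb, le_div_iff₀ (Real.log_pos (by norm_num))]
      have hlog2 : Real.log 2 ≤ 1 := by
        calc Real.log 2 ≤ 2 - 1 := Real.log_le_sub_one_of_pos (by norm_num)
          _ = 1 := by norm_num
      have hlogn : 0 ≤ Real.log ((Fintype.card K : ℕ) : ℝ) := Real.log_nonneg (by exact_mod_cast hn1)
      nlinarith
    rw [h1, hL]; linarith
  have hHnn : 0 ≤ ∑ i : Fin (Fintype.card K), ((i : ℝ) + 1)⁻¹ :=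
    Finset.sum_nonneg (fun i _ => (inv_pos.mpr (hi1 i)).le)
  have holder2 : S ≤ T ^ α * L ^ (ρ * α) := by
    refine holder.trans (mul_le_mul_of_nonneg_left ?_ (Real.rpow_nonneg hT0.le _))
    exact Real.rpow_le_rpow hHnn hharm (by positivity)
  have lower : S ^ (1 + ρ) ≤ T * L ^ ρ := by
    have h1 : S ^ (1 + ρ) ≤ (T ^ α * L ^ (ρ * α)) ^ (1 + ρ) :=
      Real.rpow_le_rpow hS0.le holder2 h1ρ.le
    have h2 : (T ^ α * L ^ (ρ * α)) ^ (1 + ρ) = T * L ^ ρ := by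
      rw [Real.mul_rpow (Real.rpow_nonneg hT0.le _) (Real.rpow_nonneg hL0.le _),
        ← Real.rpow_mul hT0.le, ← Real.rpow_mul hL0.le, hα1, Real.rpow_one,
        show ρ * α * (1 + ρ) = ρ * (α * (1 + ρ)) by ring, hα1, mul_one]
    linarith [h2 ▸ h1]
  refine ⟨?_, upper⟩
  rw [div_le_iff₀ (Real.rpow_pos_of_pos hL0 ρ)]
  exact lower
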